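/- arXiv:2111.11150 — 9 statements merged into one kernel-verified Lean document; each statement's English description precedes it below -/
import Mathlib

section
/- Let F : ℝ → ℝ be four times continuously differentiable, and define 𝓑(F)(z) = (−(1/2)F''(z) + (3/2)F'(z) + F(z) − 1)·((1/2)F''(z) − (3/2)F'(z) + F(z) − 1) + F'(z)·((1/2)F'''(z) − (3/2)F''(z) + F'(z)). Then for every z ∈ ℝ, the derivative of the function z ↦ 𝓑(F)(z) equals 2F'(z)·((1/4)F''''(z) − (5/4)F''(z) + F(z) − 1). -/
open Real

/-- The quadratic third-order operator
`𝓑(F) = (−(1/2)F'' + (3/2)F' + F − 1)·((1/2)F'' − (3/2)F' + F − 1)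
        + F'·((1/2)F''' − (3/2)F'' + F')`. -/
noncomputable def Bop (F : ℝ → ℝ) (z : ℝ) : ℝ :=
  (-(1/2) * iteratedDeriv 2 F z + (3/2) * deriv F z + F z - 1) *
      ((1/2) * iteratedDeriv 2 F z - (3/2) * deriv F z + F z - 1)
    + deriv F z * ((1/2) * iteratedDeriv 3 F z - (3/2) * iteratedDeriv 2 F z + deriv F z)

/-- `𝓑(F)' = 2F'·((1/4)F'''' − (5/4)F'' + F − 1)`, i.e. `𝓑` is a first
integral of the operator `F ↦ ℒ⁺(ℒ⁻F) − 1`. -/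
theorem deriv_Bop (F : ℝ → ℝ) (hF : ContDiff ℝ 4 F) (z : ℝ) :
    deriv (Bop F) z =
      2 * deriv F z *
        ((1/4) * iteratedDeriv 4 F z - (5/4) * iteratedDeriv 2 F z + F z - 1) := by
  have hd : ∀ n : ℕ, n ≤ 3 → ContDiff ℝ 1 (iteratedDeriv n F) := by
    intro n hn
    rw [iteratedDeriv_eq_iterate]
    have h4 : ((1 + n : ℕ) : WithTop ℕ∞) ≤ 4 := by exact_mod_cast (by omega : 1+n ≤ 4)
    exact ContDiff.iterate_deriv' 1 n (hF.of_le h4)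
  have h0 : HasDerivAt F (deriv F z) z := by
    have := (hd 0 (by norm_num)).differentiable one_ne_zero z
    simpa [iteratedDeriv_zero] using this.hasDerivAt
  have h1 : HasDerivAt (deriv F) (iteratedDeriv 2 F z) z := by
    have := (hd 1 (by norm_num)).differentiable one_ne_zero z
    have h := this.hasDerivAt
    rw [iteratedDeriv_one] at h
    rwa [show iteratedDeriv 2 F z = deriv (deriv F) z by
      rw [iteratedDeriv_succ, iteratedDeriv_one]]
  have h2 : HasDerivAt (iteratedDeriv 2 F) (iteratedDeriv 3 F z) z := by
    have := ((hd 2 (by norm_num)).differentiable one_ne_zero z).hasDerivAt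
    rwa [show iteratedDeriv 3 F z = deriv (iteratedDeriv 2 F) z from by
      rw [iteratedDeriv_succ]]
  have h3 : HasDerivAt (iteratedDeriv 3 F) (iteratedDeriv 4 F z) z := by
    have := ((hd 3 (by norm_num)).differentiable one_ne_zero z).hasDerivAt
    rwa [show iteratedDeriv 4 F z = deriv (iteratedDeriv 3 F) z from by
      rw [iteratedDeriv_succ]]
  have hB : HasDerivAt (Bop F)
      (2 * deriv F z *
        ((1/4) * iteratedDeriv 4 F z - (5/4) * iteratedDeriv 2 F z + F z - 1)) z := by
    have := ((((h2.const_mul (-(1/2))).add (h1.const_mul ((3:ℝ)/2))).add h0).sub_const 1).mul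
        ((((h2.const_mul ((1:ℝ)/2)).sub (h1.const_mul ((3:ℝ)/2))).add h0).sub_const 1)
      |>.add (h1.mul (((h3.const_mul ((1:ℝ)/2)).sub (h2.const_mul ((3:ℝ)/2))).add h1))
    refine this.congr_deriv ?_
    simp only [Pi.add_apply, Pi.sub_apply]
    ring
  exact hB.deriv
end

section
/- Let C₁, C₂, C₃, C₄ ∈ ℝ and let F(z) = 1 + (1/2)C₁e^{−2z} + C₂e^{−z} + C₃e^{z} + (1/2)C₄e^{2z}. Then 𝓑(F)(z) = 3(C₂C₃ − C₁C₄) for every z ∈ ℝ. -/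
open Real

lemma hasDerivAt_comb (k a b c d z : ℝ) :
    HasDerivAt (fun w : ℝ => k + a * exp (-2*w) + b * exp (-w) + c * exp w + d * exp (2*w))
      (-2*a * exp (-2*z) + -b * exp (-z) + c * exp z + 2*d * exp (2*z)) z := by
  have h1 : HasDerivAt (fun w : ℝ => exp (-2*w)) (exp (-2*z) * (-2*1)) z :=
    ((hasDerivAt_id z).const_mul (-2)).exp
  have h2 : HasDerivAt (fun w : ℝ => exp (-w)) (exp (-z) * (-1)) z :=
    (hasDerivAt_id z).neg.exp
  have h3 : HasDerivAt (fun w : ℝ => exp w) (exp z) z := Real.hasDerivAt_exp z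
  have h4 : HasDerivAt (fun w : ℝ => exp (2*w)) (exp (2*z) * (2*1)) z :=
    ((hasDerivAt_id z).const_mul 2).exp
  have := ((((hasDerivAt_const z k).add (h1.const_mul a)).add (h2.const_mul b)).add
      (h3.const_mul c)).add (h4.const_mul d)
  refine this.congr_deriv ?_
  ring

lemma deriv_comb (k a b c d : ℝ) :
    deriv (fun w : ℝ => k + a * exp (-2*w) + b * exp (-w) + c * exp w + d * exp (2*w))
      = fun z => 0 + (-2*a) * exp (-2*z) + (-b) * exp (-z) + c * exp z + (2*d) * exp (2*z) := by
  funext z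
  have := (hasDerivAt_comb k a b c d z).deriv
  rw [this]; ring

/-- for `F(z) = 1 + (1/2)C₁e^{−2z} + C₂e^{−z} + C₃eᶻ + (1/2)C₄e^{2z}` one has
`𝓑(F)(z) = 3(C₂C₃ − C₁C₄)` for every `z`. -/
theorem Bop_of_extremal_solution (C₁ C₂ C₃ C₄ : ℝ) (z : ℝ) :
    Bop (fun w => 1 + (1/2) * C₁ * exp (-2*w) + C₂ * exp (-w)
      + C₃ * exp w + (1/2) * C₄ * exp (2*w)) z = 3 * (C₂ * C₃ - C₁ * C₄) := by
  have hF : (fun w => 1 + (1/2) * C₁ * exp (-2*w) + C₂ * exp (-w)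
      + C₃ * exp w + (1/2) * C₄ * exp (2*w))
      = fun w : ℝ => 1 + ((1/2)*C₁) * exp (-2*w) + C₂ * exp (-w) + C₃ * exp w
        + ((1/2)*C₄) * exp (2*w) := by funext w; ring
  rw [Bop, hF]
  simp only [iteratedDeriv_succ, iteratedDeriv_zero]
  rw [deriv_comb, deriv_comb, deriv_comb]
  have h := exp_ne_zero z
  have h3 : exp (-2*z) = exp (-z) * exp (-z) := by rw [← exp_add]; ring_nf
  have h4 : exp (2*z) = exp z * exp z := by rw [← exp_add]; ring_nf
  have hv : exp (-z) = (exp z)⁻¹ := by rw [exp_neg]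
  beta_reduce
  rw [h3, h4, hv]
  field_simp
  ring
end

section
/- Let F : ℝ → ℝ be four times continuously differentiable and suppose that 𝓑(F)(z) = 0 for every z ∈ ℝ. Then (1/4)F''''(z) − (5/4)F''(z) + F(z) = 1 for every z ∈ ℝ. -/
open Real

lemma deriv_zero_on_open {s : Set ℝ} (hs : IsOpen s) {g : ℝ → ℝ}
    (h : ∀ w ∈ s, g w = 0) : ∀ w ∈ s, deriv g w = 0 := by
  intro w hw
  have he : g =ᶠ[nhds w] (fun _ => (0:ℝ)) := Filter.eventuallyEq_of_mem (hs.mem_nhds hw) h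
  rw [he.deriv_eq, deriv_const]

/-- if `𝓑(F) ≡ 0` then `(1/4)F'''' − (5/4)F'' + F ≡ 1`. -/
theorem Bop_eq_zero_implies_linear_ode (F : ℝ → ℝ) (hF : ContDiff ℝ 4 F)
    (hB : ∀ z : ℝ, Bop F z = 0) :
    ∀ z : ℝ, (1/4) * iteratedDeriv 4 F z - (5/4) * iteratedDeriv 2 F z + F z = 1 := by
  have hd : ∀ k : ℕ, k < 4 → ∀ z : ℝ,
      HasDerivAt (iteratedDeriv k F) (iteratedDeriv (k+1) F z) z := by
    intro k hk z
    have h := (hF.differentiable_iteratedDeriv k (by exact_mod_cast hk)).differentiableAt (x := z)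
    simpa [iteratedDeriv_succ] using h.hasDerivAt
  have ha : ∀ z : ℝ, HasDerivAt F (deriv F z) z := by
    intro z; simpa [iteratedDeriv_one] using hd 0 (by norm_num) z
  have hb : ∀ z : ℝ, HasDerivAt (deriv F) (iteratedDeriv 2 F z) z := by
    intro z
    have := hd 1 (by norm_num) z
    simpa [iteratedDeriv_one] using this
  have hc : ∀ z : ℝ, HasDerivAt (iteratedDeriv 2 F) (iteratedDeriv 3 F z) z :=
    fun z => hd 2 (by norm_num) z
  have hee : ∀ z : ℝ, HasDerivAt (iteratedDeriv 3 F) (iteratedDeriv 4 F z) z :=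
    fun z => hd 3 (by norm_num) z
  -- key pointwise identity
  have hmul : ∀ z : ℝ, deriv F z *
      ((1/4) * iteratedDeriv 4 F z - (5/4) * iteratedDeriv 2 F z + F z - 1) = 0 := by
    intro z
    have h1 : HasDerivAt (fun w => -(1/2) * iteratedDeriv 2 F w + (3/2) * deriv F w + F w - 1)
        (-(1/2) * iteratedDeriv 3 F z + (3/2) * iteratedDeriv 2 F z + deriv F z) z :=
      ((((hc z).const_mul _).add ((hb z).const_mul _)).add (ha z)).sub_const 1
    have h2 : HasDerivAt (fun w => (1/2) * iteratedDeriv 2 F w - (3/2) * deriv F w + F w - 1)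
        ((1/2) * iteratedDeriv 3 F z - (3/2) * iteratedDeriv 2 F z + deriv F z) z :=
      ((((hc z).const_mul _).sub ((hb z).const_mul _)).add (ha z)).sub_const 1
    have h3 : HasDerivAt (fun w => (1/2) * iteratedDeriv 3 F w - (3/2) * iteratedDeriv 2 F w + deriv F w)
        ((1/2) * iteratedDeriv 4 F z - (3/2) * iteratedDeriv 3 F z + iteratedDeriv 2 F z) z :=
      (((hee z).const_mul _).sub ((hc z).const_mul _)).add (hb z)
    have hbig : HasDerivAt (Bop F)
        ((-(1/2) * iteratedDeriv 3 F z + (3/2) * iteratedDeriv 2 F z + deriv F z) *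
            ((1/2) * iteratedDeriv 2 F z - (3/2) * deriv F z + F z - 1)
          + (-(1/2) * iteratedDeriv 2 F z + (3/2) * deriv F z + F z - 1) *
            ((1/2) * iteratedDeriv 3 F z - (3/2) * iteratedDeriv 2 F z + deriv F z)
          + (iteratedDeriv 2 F z * ((1/2) * iteratedDeriv 3 F z - (3/2) * iteratedDeriv 2 F z + deriv F z)
            + deriv F z * ((1/2) * iteratedDeriv 4 F z - (3/2) * iteratedDeriv 3 F z + iteratedDeriv 2 F z))) z :=
      (h1.mul h2).add ((hb z).mul h3)
    have h0 : HasDerivAt (Bop F) 0 z := by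
      have : Bop F = fun _ => (0:ℝ) := funext hB
      rw [this]; exact hasDerivAt_const z 0
    have heq := hbig.unique h0
    linear_combination (1/2) * heq
  have hGcont : Continuous (fun z => (1/4) * iteratedDeriv 4 F z - (5/4) * iteratedDeriv 2 F z + F z) := by
    have h4 : Continuous (iteratedDeriv 4 F) := hF.continuous_iteratedDeriv 4 (by norm_num)
    have h2 : Continuous (iteratedDeriv 2 F) := hF.continuous_iteratedDeriv 2 (by norm_num)
    have hcF : Continuous F := hF.continuous
    continuity
  intro z
  by_contra hne
  have hopen : IsOpen {w : ℝ | (1/4) * iteratedDeriv 4 F w - (5/4) * iteratedDeriv 2 F w + F w ≠ 1} :=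
    isOpen_ne_fun hGcont continuous_const
  obtain ⟨ε, hε, hball⟩ := Metric.isOpen_iff.mp hopen z hne
  have hds : ∀ w ∈ Metric.ball z ε, deriv F w = 0 := by
    intro w hw
    have := hmul w
    rcases mul_eq_zero.mp this with h | h
    · exact h
    · exact absurd (by linarith [sub_eq_zero.mp h] : (1/4) * iteratedDeriv 4 F w - (5/4) * iteratedDeriv 2 F w + F w = 1) (hball hw)
  have h2s : ∀ w ∈ Metric.ball z ε, iteratedDeriv 2 F w = 0 := by
    intro w hw
    have := deriv_zero_on_open Metric.isOpen_ball hds w hw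
    simpa [iteratedDeriv_succ, iteratedDeriv_one] using this
  have h3s : ∀ w ∈ Metric.ball z ε, iteratedDeriv 3 F w = 0 := by
    intro w hw
    have := deriv_zero_on_open Metric.isOpen_ball h2s w hw
    simpa [iteratedDeriv_succ] using this
  have h4s : ∀ w ∈ Metric.ball z ε, iteratedDeriv 4 F w = 0 := by
    intro w hw
    have := deriv_zero_on_open Metric.isOpen_ball h3s w hw
    simpa [iteratedDeriv_succ] using this
  have hzmem : z ∈ Metric.ball z ε := Metric.mem_ball_self hε
  have hBz := hB z
  rw [Bop] at hBz
  rw [hds z hzmem, h2s z hzmem, h3s z hzmem] at hBz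
  have hF1 : F z = 1 := by nlinarith [sq_nonneg (F z - 1)]
  exact hne (by rw [h2s z hzmem, h4s z hzmem, hF1]; norm_num)
end

section
/- Let F : ℝ → ℝ be four times continuously differentiable. Then F satisfies both (1/4)F''''(z) − (5/4)F''(z) + F(z) = 1 and 𝓑(F)(z) = 0 for all z ∈ ℝ if and only if there exist constants C₁, C₂, C₃, C₄ ∈ ℝ with C₁C₄ − C₂C₃ = 0 such that F(z) = 1 + (1/2)C₁e^{−2z} + C₂e^{−z} + C₃e^{z} + (1/2)C₄e^{2z} for all z ∈ ℝ. -/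
open Real

/-! ### Auxiliary machinery -/

/-- The general solution family of the linear ODE (minus the constant `1`). -/
noncomputable def Efun (a b c d : ℝ) : ℝ → ℝ :=
  fun z => a * exp (-2*z) + b * exp (-z) + c * exp z + d * exp (2*z)

lemma hasDerivAt_Efun (a b c d z : ℝ) :
    HasDerivAt (Efun a b c d) (Efun (-2*a) (-b) c (2*d) z) z := by
  have h1 : HasDerivAt (fun z : ℝ => exp (-2*z)) (exp (-2*z) * (-2*1)) z :=
    ((hasDerivAt_id z).const_mul (-2)).exp
  have h2 : HasDerivAt (fun z : ℝ => exp (-z)) (exp (-z) * (-1)) z :=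
    ((hasDerivAt_id z).neg).exp
  have h3 : HasDerivAt (fun z : ℝ => exp z) (exp z) z := Real.hasDerivAt_exp z
  have h4 : HasDerivAt (fun z : ℝ => exp (2*z)) (exp (2*z) * (2*1)) z :=
    ((hasDerivAt_id z).const_mul 2).exp
  have := (((h1.const_mul a).add (h2.const_mul b)).add (h3.const_mul c)).add (h4.const_mul d)
  refine this.congr_deriv ?_
  simp only [Efun]; ring

lemma deriv_Efun (a b c d : ℝ) : deriv (Efun a b c d) = Efun (-2*a) (-b) c (2*d) :=
  funext fun z => (hasDerivAt_Efun a b c d z).deriv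

lemma deriv_G (a b c d : ℝ) :
    deriv (fun z => 1 + Efun a b c d z) = Efun (-2*a) (-b) c (2*d) :=
  funext fun z => (((hasDerivAt_const z (1:ℝ)).add (hasDerivAt_Efun a b c d z)).deriv).trans
    (by simp)

lemma id2_G (a b c d z : ℝ) :
    iteratedDeriv 2 (fun z => 1 + Efun a b c d z) z = Efun (4*a) b c (4*d) z := by
  have h : iteratedDeriv 2 (fun z => 1 + Efun a b c d z)
      = deriv (iteratedDeriv 1 (fun z => 1 + Efun a b c d z)) := iteratedDeriv_succ
  rw [h, iteratedDeriv_one, deriv_G, deriv_Efun]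
  simp only [Efun]; ring

lemma id3_G (a b c d z : ℝ) :
    iteratedDeriv 3 (fun z => 1 + Efun a b c d z) z = Efun (-8*a) (-b) c (8*d) z := by
  have h : iteratedDeriv 3 (fun z => 1 + Efun a b c d z)
      = deriv (iteratedDeriv 2 (fun z => 1 + Efun a b c d z)) := iteratedDeriv_succ
  have h2 : iteratedDeriv 2 (fun z => 1 + Efun a b c d z) = Efun (4*a) b c (4*d) :=
    funext (id2_G a b c d)
  rw [h, h2, deriv_Efun]
  simp only [Efun]; ring

lemma id4_G (a b c d z : ℝ) :
    iteratedDeriv 4 (fun z => 1 + Efun a b c d z) z = Efun (16*a) b c (16*d) z := by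
  have h : iteratedDeriv 4 (fun z => 1 + Efun a b c d z)
      = deriv (iteratedDeriv 3 (fun z => 1 + Efun a b c d z)) := iteratedDeriv_succ
  have h3 : iteratedDeriv 3 (fun z => 1 + Efun a b c d z) = Efun (-8*a) (-b) c (8*d) :=
    funext (id3_G a b c d)
  rw [h, h3, deriv_Efun]
  simp only [Efun]; ring

lemma expand_exp (z : ℝ) : exp (-2*z) = (exp z * exp z)⁻¹ ∧ exp (-z) = (exp z)⁻¹ ∧
    exp (2*z) = exp z * exp z := by
  refine ⟨?_, exp_neg z, by rw [two_mul, exp_add]⟩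
  rw [show (-2)*z = -(2*z) by ring, exp_neg, two_mul, exp_add]

lemma linODE_G (a b c d z : ℝ) :
    (1/4) * iteratedDeriv 4 (fun z => 1 + Efun a b c d z) z
      - (5/4) * iteratedDeriv 2 (fun z => 1 + Efun a b c d z) z
      + (1 + Efun a b c d z) = 1 := by
  rw [id4_G, id2_G]
  simp only [Efun]; ring

lemma Bop_G (a b c d z : ℝ) :
    Bop (fun z => 1 + Efun a b c d z) z = 3 * (b * c - 4 * a * d) := by
  unfold Bop
  rw [deriv_G, id2_G, id3_G]
  obtain ⟨e1, e2, e3⟩ := expand_exp z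
  simp only [Efun, e1, e2, e3]
  have h := exp_ne_zero z
  field_simp
  ring

lemma first_order (f : ℝ → ℝ) (c : ℝ) (hf : Differentiable ℝ f)
    (h : ∀ z, deriv f z = c * f z) : ∀ z, f z = f 0 * exp (c*z) := by
  have key : ∀ z, f z * exp (-(c*z)) = f 0 := by
    have hd : ∀ z, HasDerivAt (fun z => f z * exp (-(c*z))) 0 z := by
      intro z
      have h1 : HasDerivAt f (c * f z) z := h z ▸ (hf z).hasDerivAt
      have h2 : HasDerivAt (fun z : ℝ => exp (-(c*z))) (exp (-(c*z)) * (-(c*1))) z :=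
        (((hasDerivAt_id z).const_mul c).neg).exp
      have := h1.mul h2
      refine this.congr_deriv ?_; ring
    have hconst := is_const_of_deriv_eq_zero (f := fun z => f z * exp (-(c*z)))
      (fun z => (hd z).differentiableAt) (fun z => (hd z).deriv)
    intro z
    have := hconst z 0
    simpa using this
  intro z
  have hz := key z
  have : f z = f z * exp (-(c*z)) * exp (c*z) := by
    rw [mul_assoc, ← exp_add]; simp
  rw [this, hz]

lemma second_order (f : ℝ → ℝ) (k : ℝ) (hk : k ≠ 0) (hf : Differentiable ℝ f)
    (hf' : Differentiable ℝ (deriv f))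
    (h : ∀ z, deriv (deriv f) z = k^2 * f z) :
    ∃ A B, ∀ z, f z = A * exp (k*z) + B * exp (-(k*z)) := by
  set u : ℝ → ℝ := fun z => deriv f z + k * f z with hu_def
  have hu_diff : Differentiable ℝ u := hf'.add (hf.const_mul k)
  have hu_deriv : ∀ z, deriv u z = k * u z := by
    intro z
    have : deriv u z = deriv (deriv f) z + k * deriv f z := by
      rw [hu_def]
      rw [deriv_fun_add (hf' z) ((hf.const_mul k) z), deriv_const_mul k (hf z)]
    rw [this, h z]; simp only [hu_def]; ring
  have hu := first_order u k hu_diff hu_deriv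
  refine ⟨u 0 / (2*k), f 0 - u 0 / (2*k), ?_⟩
  have key : ∀ z, f z * exp (k*z) - u 0 / (2*k) * exp (2*k*z) = f 0 - u 0 / (2*k) := by
    have hd : ∀ z, HasDerivAt (fun z => f z * exp (k*z) - u 0 / (2*k) * exp (2*k*z)) 0 z := by
      intro z
      have h1 : HasDerivAt f (deriv f z) z := (hf z).hasDerivAt
      have h2 : HasDerivAt (fun z : ℝ => exp (k*z)) (exp (k*z) * (k*1)) z :=
        ((hasDerivAt_id z).const_mul k).exp
      have h3 : HasDerivAt (fun z : ℝ => exp (2*k*z)) (exp (2*k*z) * (2*k*1)) z :=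
        ((hasDerivAt_id z).const_mul (2*k)).exp
      have := (h1.mul h2).sub (h3.const_mul (u 0 / (2*k)))
      refine this.congr_deriv ?_
      have husub : deriv f z = u z - k * f z := by simp only [hu_def]; ring
      have hexp2 : exp (2*k*z) = exp (k*z) * exp (k*z) := by
        rw [← exp_add]; ring_nf
      rw [husub, hu z, hexp2]
      field_simp
      ring
    have hconst := is_const_of_deriv_eq_zero
      (f := fun z => f z * exp (k*z) - u 0 / (2*k) * exp (2*k*z))
      (fun z => (hd z).differentiableAt) (fun z => (hd z).deriv)
    intro z
    have := hconst z 0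
    simpa using this
  intro z
  have hz := key z
  have hexp2 : exp (2*k*z) = exp (k*z) * exp (k*z) := by rw [← exp_add]; ring_nf
  have hne := exp_ne_zero (k*z)
  rw [hexp2] at hz
  have hz2 : f z * exp (k*z) = f 0 - u 0/(2*k) + u 0/(2*k)*(exp (k*z)*exp (k*z)) := by
    linarith
  have hfz : f z = (f z * exp (k*z)) * (exp (k*z))⁻¹ := by
    rw [mul_assoc, mul_inv_cancel₀ hne, mul_one]
  rw [exp_neg, hfz, hz2]
  field_simp
  ring

/-- `F` satisfies both `(1/4)F'''' − (5/4)F'' + F = 1` and `𝓑(F) = 0` on `ℝ`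
iff `F(z) = 1 + (1/2)C₁e^{−2z} + C₂e^{−z} + C₃eᶻ + (1/2)C₄e^{2z}` with `C₁C₄ − C₂C₃ = 0`. -/
theorem bachFlat_iff (F : ℝ → ℝ) (hF : ContDiff ℝ 4 F) :
    ((∀ z : ℝ, (1/4) * iteratedDeriv 4 F z - (5/4) * iteratedDeriv 2 F z + F z = 1) ∧
      (∀ z : ℝ, Bop F z = 0)) ↔
    (∃ C₁ C₂ C₃ C₄ : ℝ, C₁ * C₄ - C₂ * C₃ = 0 ∧
      ∀ z : ℝ, F z = 1 + (1/2) * C₁ * exp (-2*z) + C₂ * exp (-z)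
        + C₃ * exp z + (1/2) * C₄ * exp (2*z)) := by
  constructor
  · rintro ⟨h1, h2⟩
    -- Differentiability bookkeeping
    have hF' : ContDiff ℝ ((4:ℕ) : WithTop ℕ∞) F := by exact_mod_cast hF
    have D0 : Differentiable ℝ F := hF.differentiable (by norm_num)
    have C3 : ContDiff ℝ ((3:ℕ) : WithTop ℕ∞) (deriv F) := by
      have := hF'.iterate_deriv' 3 1
      simpa using this
    have C2 : ContDiff ℝ ((2:ℕ) : WithTop ℕ∞) (deriv (deriv F)) := by
      have := hF'.iterate_deriv' 2 2
      simpa [Function.iterate_succ, Function.comp] using this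
    have C1 : ContDiff ℝ ((1:ℕ) : WithTop ℕ∞) (deriv (deriv (deriv F))) := by
      have := hF'.iterate_deriv' 1 3
      simpa [Function.iterate_succ, Function.comp] using this
    have D1 : Differentiable ℝ (deriv F) := C3.differentiable (by
      norm_num)
    have D2 : Differentiable ℝ (deriv (deriv F)) := C2.differentiable (by
      norm_num)
    have D3 : Differentiable ℝ (deriv (deriv (deriv F))) := C1.differentiable (by norm_num)
    have e2 : iteratedDeriv 2 F = deriv (deriv F) := by
      have h : iteratedDeriv 2 F = deriv (iteratedDeriv 1 F) := iteratedDeriv_succ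
      rw [h, iteratedDeriv_one]
    have e3 : iteratedDeriv 3 F = deriv (deriv (deriv F)) := by
      have h : iteratedDeriv 3 F = deriv (iteratedDeriv 2 F) := iteratedDeriv_succ
      rw [h, e2]
    have e4 : iteratedDeriv 4 F = deriv (deriv (deriv (deriv F))) := by
      have h : iteratedDeriv 4 F = deriv (iteratedDeriv 3 F) := iteratedDeriv_succ
      rw [h, e3]
    have h1' : ∀ z, deriv (deriv (deriv (deriv F))) z
        = 5 * deriv (deriv F) z - 4 * F z + 4 := by
      intro z
      have := h1 z
      rw [e4, e2] at this
      linarith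
    -- the function g := F'' - F + 1 satisfies g'' = 4 g
    set g : ℝ → ℝ := fun z => deriv (deriv F) z - F z + 1 with hg_def
    have hg_hasDeriv : ∀ z, HasDerivAt g (deriv (deriv (deriv F)) z - deriv F z) z := by
      intro z
      exact (((D2 z).hasDerivAt).sub ((D0 z).hasDerivAt)).add_const 1
    have hg_diff : Differentiable ℝ g := fun z => (hg_hasDeriv z).differentiableAt
    have hg_deriv : deriv g = fun z => deriv (deriv (deriv F)) z - deriv F z :=
      funext fun z => (hg_hasDeriv z).deriv
    have hg_deriv_diff : Differentiable ℝ (deriv g) := by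
      rw [hg_deriv]; exact D3.sub D1
    have hg_ode : ∀ z, deriv (deriv g) z = (2:ℝ)^2 * g z := by
      intro z
      rw [hg_deriv]
      rw [deriv_fun_sub (D3 z) (D1 z)]
      rw [h1' z, hg_def]
      simp only
      ring
    -- the function w := F'' - 4F + 4 satisfies w'' = w
    set w : ℝ → ℝ := fun z => deriv (deriv F) z - 4 * F z + 4 with hw_def
    have hw_hasDeriv : ∀ z, HasDerivAt w (deriv (deriv (deriv F)) z - 4 * deriv F z) z := by
      intro z
      exact (((D2 z).hasDerivAt).sub (((D0 z).hasDerivAt).const_mul 4)).add_const 4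
    have hw_diff : Differentiable ℝ w := fun z => (hw_hasDeriv z).differentiableAt
    have hw_deriv : deriv w = fun z => deriv (deriv (deriv F)) z - 4 * deriv F z :=
      funext fun z => (hw_hasDeriv z).deriv
    have hw_deriv_diff : Differentiable ℝ (deriv w) := by
      rw [hw_deriv]; exact D3.sub (D1.const_mul 4)
    have hw_ode : ∀ z, deriv (deriv w) z = (1:ℝ)^2 * w z := by
      intro z
      rw [hw_deriv]
      rw [deriv_fun_sub (D3 z) ((D1.const_mul 4) z), deriv_const_mul 4 (D1 z)]
      rw [h1' z, hw_def]
      simp only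
      ring
    obtain ⟨A, B, hAB⟩ := second_order g 2 (by norm_num) hg_diff hg_deriv_diff hg_ode
    obtain ⟨P, Q, hPQ⟩ := second_order w 1 (by norm_num) hw_diff hw_deriv_diff hw_ode
    refine ⟨(2/3)*B, -Q/3, -P/3, (2/3)*A, ?_, ?_⟩
    · -- constraint from Bop = 0
      have hFeq : ∀ z : ℝ, F z = 1 + Efun ((1/2)*((2/3)*B)) (-Q/3) (-P/3) ((1/2)*((2/3)*A)) z := by
        intro z
        have hg := hAB z
        have hw' := hPQ z
        rw [hg_def] at hg
        rw [hw_def] at hw'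
        simp only at hg hw'
        -- 3 * (F z - 1) = g z - w z
        simp only [Efun]
        have hexpr : 3 * (F z - 1) = (deriv (deriv F) z - F z + 1)
            - (deriv (deriv F) z - 4 * F z + 4) := by ring
        rw [hg, hw'] at hexpr
        have he1 : exp (-(2*z)) = exp (-2*z) := by ring_nf
        have he2 : exp (-(1*z)) = exp (-z) := by ring_nf
        have he3 : exp (1*z) = exp z := by ring_nf
        rw [he1, he2, he3] at hexpr
        linarith
      have hFG : F = fun z => 1 + Efun ((1/2)*((2/3)*B)) (-Q/3) (-P/3) ((1/2)*((2/3)*A)) z :=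
        funext hFeq
      have hB := h2 0
      rw [hFG, Bop_G] at hB
      nlinarith [hB]
    · intro z
      have hg := hAB z
      have hw' := hPQ z
      rw [hg_def] at hg
      rw [hw_def] at hw'
      simp only at hg hw'
      have hexpr : 3 * (F z - 1) = (deriv (deriv F) z - F z + 1)
          - (deriv (deriv F) z - 4 * F z + 4) := by ring
      rw [hg, hw'] at hexpr
      have he1 : exp (-(2*z)) = exp (-2*z) := by ring_nf
      have he2 : exp (-(1*z)) = exp (-z) := by ring_nf
      have he3 : exp (1*z) = exp z := by ring_nf
      rw [he1, he2, he3] at hexpr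
      linarith
  · rintro ⟨C₁, C₂, C₃, C₄, hC, hFeq⟩
    have hFG : F = fun z => 1 + Efun ((1/2)*C₁) C₂ C₃ ((1/2)*C₄) z := by
      funext z
      rw [hFeq z]
      simp only [Efun]; ring
    constructor
    · intro z
      rw [hFG]
      exact linODE_G _ _ _ _ z
    · intro z
      rw [hFG, Bop_G]
      nlinarith [hC]
end

section
/- Let I ⊆ ℝ be an open interval and let F, C : ℝ → ℝ be differentiable on I with F(z) > 0 and C(z) > 0 for all z ∈ I. Suppose that for all z ∈ I, (d/dz)√(F(z)) = √(F(z)) − 1 and C'(z)/C(z) = −1 + 2/√(F(z)). Then there exist constants C₀ > 0 and C₁ ∈ ℝ such that for all z ∈ I, 1 + C₁e^{z} > 0, F(z) = (1 + C₁e^{z})², and C(z) = C₀e^{z}/(1 + C₁e^{z})². -/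
open Real

/-- On a convex set, a function with vanishing derivative is constant. -/
lemma aux_const_of_deriv_zero {I : Set ℝ} (hconv : Convex ℝ I) {f : ℝ → ℝ}
    (hf : ∀ z ∈ I, HasDerivAt f 0 z) {x y : ℝ} (hx : x ∈ I) (hy : y ∈ I) :
    f x = f y := by
  have h := hconv.norm_image_sub_le_of_norm_hasDerivWithin_le
    (f' := fun _ => (0 : ℝ)) (C := 0)
    (fun z hz => (hf z hz).hasDerivWithinAt) (fun z _ => by simp) hy hx
  simp only [zero_mul, norm_le_zero_iff, sub_eq_zero] at h
  exact h

/-- on an open interval where `F, C > 0` are differentiable and satisfy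
`(√F)' = √F − 1` and `C'/C = −1 + 2/√F`, there are constants `C₀ > 0` and `C₁` with
`1 + C₁eᶻ > 0`, `F = (1 + C₁eᶻ)²` and `C = C₀eᶻ/(1 + C₁eᶻ)²` on the interval. -/
theorem hyperKahler_ode_solution (I : Set ℝ) (hIopen : IsOpen I)
    (hIconn : IsPreconnected I) (F C : ℝ → ℝ)
    (hF : ∀ z ∈ I, DifferentiableAt ℝ F z) (hC : ∀ z ∈ I, DifferentiableAt ℝ C z)
    (hFpos : ∀ z ∈ I, 0 < F z) (hCpos : ∀ z ∈ I, 0 < C z)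
    (h1 : ∀ z ∈ I, deriv (fun w => Real.sqrt (F w)) z = Real.sqrt (F z) - 1)
    (h2 : ∀ z ∈ I, deriv C z / C z = -1 + 2 / Real.sqrt (F z)) :
    ∃ C₀ C₁ : ℝ, 0 < C₀ ∧ ∀ z ∈ I,
      0 < 1 + C₁ * exp z ∧
      F z = (1 + C₁ * exp z)^2 ∧
      C z = C₀ * exp z / (1 + C₁ * exp z)^2 := by
  rcases Set.eq_empty_or_nonempty I with hI | ⟨z₀, hz₀⟩
  · exact ⟨1, 0, one_pos, fun z hz => by simp [hI] at hz⟩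
  have hconv : Convex ℝ I := hIconn.ordConnected.convex
  set s : ℝ → ℝ := fun w => Real.sqrt (F w) with hs_def
  -- basic facts
  have hspos : ∀ z ∈ I, 0 < s z := fun z hz => Real.sqrt_pos.2 (hFpos z hz)
  have hsd : ∀ z ∈ I, HasDerivAt s (s z - 1) z := by
    intro z hz
    have hdiff : DifferentiableAt ℝ s z :=
      ((Real.hasDerivAt_sqrt (hFpos z hz).ne').comp z (hF z hz).hasDerivAt).differentiableAt
    have := hdiff.hasDerivAt
    rwa [h1 z hz] at this
  have hexp : ∀ z : ℝ, HasDerivAt (fun w => Real.exp (-w)) (-Real.exp (-z)) z := by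
    intro z
    have := (Real.hasDerivAt_exp (-z)).comp z ((hasDerivAt_id z).neg)
    refine this.congr_deriv ?_
    simp
  -- u := (s - 1) * exp(-z) is constant
  set u : ℝ → ℝ := fun w => (s w - 1) * Real.exp (-w) with hu_def
  have hud : ∀ z ∈ I, HasDerivAt u 0 z := by
    intro z hz
    have := ((hsd z hz).sub_const 1).mul (hexp z)
    refine this.congr_deriv ?_
    ring
  -- v := C * s^2 * exp(-z) is constant
  set v : ℝ → ℝ := fun w => C w * s w ^ 2 * Real.exp (-w) with hv_def
  have hCd : ∀ z ∈ I, HasDerivAt C (C z * (-1 + 2 / s z)) z := by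
    intro z hz
    have h := h2 z hz
    have hCne : C z ≠ 0 := (hCpos z hz).ne'
    have : deriv C z = C z * (-1 + 2 / s z) := by
      field_simp at h ⊢
      linarith [h]
    rw [← this]
    exact (hC z hz).hasDerivAt
  have hvd : ∀ z ∈ I, HasDerivAt v 0 z := by
    intro z hz
    have hs2 : HasDerivAt (fun w => s w ^ 2) (2 * s z ^ 1 * (s z - 1)) z := by
      exact ((hsd z hz).pow 2).congr_deriv (by norm_num)
    have := ((hCd z hz).mul hs2).mul (hexp z)
    refine this.congr_deriv ?_
    have hsne : s z ≠ 0 := (hspos z hz).ne'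
    simp only [Pi.mul_apply]
    field_simp
    ring
  -- define constants
  refine ⟨C z₀ * s z₀ ^ 2 * Real.exp (-z₀), (s z₀ - 1) * Real.exp (-z₀),
    mul_pos (mul_pos (hCpos z₀ hz₀) (pow_pos (hspos z₀ hz₀) 2)) (Real.exp_pos _), fun z hz => ?_⟩
  have hu : u z = u z₀ := aux_const_of_deriv_zero hconv hud hz hz₀
  have hv : v z = v z₀ := aux_const_of_deriv_zero hconv hvd hz hz₀
  have hexpz : Real.exp (-z) * Real.exp z = 1 := by
    rw [← Real.exp_add]; simp
  have hsz : s z = 1 + (s z₀ - 1) * Real.exp (-z₀) * Real.exp z := by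
    have : (s z - 1) * Real.exp (-z) * Real.exp z
        = (s z₀ - 1) * Real.exp (-z₀) * Real.exp z := congrArg (fun t => t * Real.exp z) hu
    rw [mul_assoc, hexpz, mul_one] at this
    linarith
  have hpos : 0 < 1 + (s z₀ - 1) * Real.exp (-z₀) * Real.exp z := by
    rw [← hsz]; exact hspos z hz
  refine ⟨hpos, ?_, ?_⟩
  · rw [← hsz, hs_def]
    exact (Real.sq_sqrt (hFpos z hz).le).symm
  · have : C z * s z ^ 2 * Real.exp (-z) * Real.exp z
        = C z₀ * s z₀ ^ 2 * Real.exp (-z₀) * Real.exp z := congrArg (fun t => t * Real.exp z) hv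
    rw [mul_assoc (C z * s z ^ 2), hexpz, mul_one] at this
    rw [← hsz]
    have hsne : s z ≠ 0 := (hspos z hz).ne'
    field_simp
    linarith [this]
end

section
/- Let C₁, C₂, C₃, C₄, C₅, C₆ ∈ ℝ satisfy C₁C₅ − C₂C₆ = 0 and C₃C₅ − C₄C₆ = 0, let I ⊆ ℝ be an open interval on which C₅ + C₆e^{−z} ≠ 0, and define F(z) = 1 + (1/2)C₁e^{−2z} + C₂e^{−z} + C₃e^{z} + (1/2)C₄e^{2z} and C(z) = e^{−z}/(C₅ + C₆e^{−z})². Then for every z ∈ I, −4C(z)^{−1}(F''(z) + (1/2)F(z) − 2) − 24C(z)^{−3/2}·(d/dz)(F(z)·(d/dz)√(C(z))) = −24(C₂C₅² − 2C₅C₆ + C₃C₆²). -/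
open Real

set_option maxHeartbeats 2000000

lemma hexp' (a w : ℝ) : HasDerivAt (fun x : ℝ => Real.exp (a * x)) (a * Real.exp (a * w)) w := by
  simpa [Function.comp_def, mul_comm] using (Real.hasDerivAt_exp (a * w)).comp w ((hasDerivAt_id w).const_mul a)

lemma hexp_neg' (w : ℝ) : HasDerivAt (fun x : ℝ => Real.exp (-x)) (-Real.exp (-w)) w := by
  simpa [Function.comp_def] using (Real.hasDerivAt_exp (-w)).comp w (hasDerivAt_neg w)

/-- for the general Einstein solution `(F, C)` the scalar curvature
`−4C⁻¹(F'' + (1/2)F − 2) − 24C^{−3/2}·(F·(√C)')'` is the constant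
`−24(C₂C₅² − 2C₅C₆ + C₃C₆²)` on any open interval where `C₅ + C₆e^{−z} ≠ 0`. -/
theorem einstein_scalar_curvature_const (C₁ C₂ C₃ C₄ C₅ C₆ : ℝ)
    (h1 : C₁ * C₅ - C₂ * C₆ = 0) (h2 : C₃ * C₅ - C₄ * C₆ = 0)
    (I : Set ℝ) (hIopen : IsOpen I) (hIconn : IsPreconnected I)
    (hI : ∀ z ∈ I, C₅ + C₆ * exp (-z) ≠ 0)
    (F C : ℝ → ℝ)
    (hFdef : ∀ z : ℝ, F z = 1 + (1/2) * C₁ * exp (-2*z) + C₂ * exp (-z)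
      + C₃ * exp z + (1/2) * C₄ * exp (2*z))
    (hCdef : ∀ z : ℝ, C z = exp (-z) / (C₅ + C₆ * exp (-z))^2) :
    ∀ z ∈ I,
      (-4) * (C z)⁻¹ * (iteratedDeriv 2 F z + (1/2) * F z - 2)
        - 24 * (C z) ^ (-(3/2) : ℝ) *
          deriv (fun w => F w * deriv (fun u => Real.sqrt (C u)) w) z
      = -24 * (C₂ * C₅^2 - 2 * C₅ * C₆ + C₃ * C₆^2) := by
  have hFeq : F = fun z => 1 + (1/2) * C₁ * exp (-2*z) + C₂ * exp (-z)
      + C₃ * exp z + (1/2) * C₄ * exp (2*z) := funext hFdef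
  have hCeq : C = fun z => exp (-z) / (C₅ + C₆ * exp (-z))^2 := funext hCdef
  subst hFeq hCeq
  intro z hz
  beta_reduce
  have hDz : C₅ + C₆ * exp (-z) ≠ 0 := hI z hz
  obtain ⟨s, hsor, hsz⟩ : ∃ s : ℝ, (s = 1 ∨ s = -1) ∧ 0 < s * (C₅ + C₆ * exp (-z)) := by
    rcases lt_or_gt_of_ne hDz with h | h
    · exact ⟨-1, Or.inr rfl, by nlinarith⟩
    · exact ⟨1, Or.inl rfl, by nlinarith⟩
  have hs2 : s ^ 2 = 1 := by rcases hsor with rfl | rfl <;> norm_num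
  set U : Set ℝ := {w | 0 < s * (C₅ + C₆ * exp (-w))} with hU_def
  have hUopen : IsOpen U := isOpen_lt continuous_const (by continuity)
  have hzU : z ∈ U := hsz
  -- square root formula
  have hsqform : ∀ w : ℝ, 0 < s * (C₅ + C₆ * exp (-w)) →
      exp (-w) / (C₅ + C₆ * exp (-w))^2
        = (exp (-(1:ℝ)/2 * w) / (s * (C₅ + C₆ * exp (-w))))^2 := by
    intro w hw
    have hsq : exp (-(1:ℝ)/2 * w) ^ 2 = exp (-w) := by
      rw [sq, ← Real.exp_add]; congr 1; ring
    rw [div_pow, mul_pow, hs2, one_mul, hsq]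
  have hsqrt : ∀ w ∈ U, Real.sqrt (exp (-w) / (C₅ + C₆ * exp (-w))^2)
      = exp (-(1:ℝ)/2 * w) / (s * (C₅ + C₆ * exp (-w))) := by
    intro w hw
    have hw' : 0 < s * (C₅ + C₆ * exp (-w)) := hw
    rw [hsqform w hw']
    exact Real.sqrt_sq (le_of_lt (div_pos (exp_pos _) hw'))
  -- derivative of the denominator
  have hDen : ∀ w : ℝ, HasDerivAt (fun x => s * (C₅ + C₆ * exp (-x)))
      (s * (C₆ * -exp (-w))) w :=
    fun w => (((hexp_neg' w).const_mul C₆).const_add C₅).const_mul s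
  -- g' : explicit derivative of √C
  set g' : ℝ → ℝ := fun w =>
    (-(1:ℝ)/2 * exp (-(1:ℝ)/2 * w) * (s * (C₅ + C₆ * exp (-w)))
      - exp (-(1:ℝ)/2 * w) * (s * (C₆ * -exp (-w)))) / (s * (C₅ + C₆ * exp (-w))) ^ 2
    with hg'_def
  have hHasG : ∀ w ∈ U, HasDerivAt
      (fun x => exp (-(1:ℝ)/2 * x) / (s * (C₅ + C₆ * exp (-x)))) (g' w) w := by
    intro w hw
    have hw' : 0 < s * (C₅ + C₆ * exp (-w)) := hw
    have := ((hexp' (-(1:ℝ)/2) w).const_mul (-(1:ℝ)/2))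
    exact (hexp' (-(1:ℝ)/2) w).div (hDen w) hw'.ne'
  have hderiv_sqrt : ∀ w ∈ U,
      deriv (fun u => Real.sqrt (exp (-u) / (C₅ + C₆ * exp (-u))^2)) w = g' w := by
    intro w hw
    have hev : (fun u => Real.sqrt (exp (-u) / (C₅ + C₆ * exp (-u))^2))
        =ᶠ[nhds w] (fun x => exp (-(1:ℝ)/2 * x) / (s * (C₅ + C₆ * exp (-x)))) := by
      filter_upwards [hUopen.mem_nhds hw] with x hx using hsqrt x hx
    rw [hev.deriv_eq]
    exact (hHasG w hw).deriv
  -- derivatives of F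
  have hFder : ∀ w : ℝ, HasDerivAt
      (fun x => 1 + (1/2) * C₁ * exp (-2*x) + C₂ * exp (-x) + C₃ * exp x
        + (1/2) * C₄ * exp (2*x))
      ((1/2) * C₁ * (-2 * exp (-2*w)) + C₂ * -exp (-w) + C₃ * exp w
        + (1/2) * C₄ * (2 * exp (2*w))) w := fun w =>
    (((((hexp' (-2) w).const_mul ((1/2) * C₁)).const_add 1).add
      ((hexp_neg' w).const_mul C₂)).add
      ((Real.hasDerivAt_exp w).const_mul C₃)).add
      ((hexp' 2 w).const_mul ((1/2) * C₄))
  have hF'der : ∀ w : ℝ, HasDerivAt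
      (fun x => (1/2) * C₁ * (-2 * exp (-2*x)) + C₂ * -exp (-x) + C₃ * exp x
        + (1/2) * C₄ * (2 * exp (2*x)))
      ((1/2) * C₁ * (-2 * (-2 * exp (-2*w))) + C₂ * -(-exp (-w)) + C₃ * exp w
        + (1/2) * C₄ * (2 * (2 * exp (2*w)))) w := fun w =>
    (((((hexp' (-2) w).const_mul (-2)).const_mul ((1/2) * C₁)).add
      (((hexp_neg' w).neg).const_mul C₂)).add
      ((Real.hasDerivAt_exp w).const_mul C₃)).add
      (((hexp' 2 w).const_mul 2).const_mul ((1/2) * C₄))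
  have hit : iteratedDeriv 2
      (fun z => 1 + (1/2) * C₁ * exp (-2*z) + C₂ * exp (-z) + C₃ * exp z
        + (1/2) * C₄ * exp (2*z)) z
      = (1/2) * C₁ * (-2 * (-2 * exp (-2*z))) + C₂ * -(-exp (-z)) + C₃ * exp z
        + (1/2) * C₄ * (2 * (2 * exp (2*z))) := by
    rw [show (2:ℕ) = 1 + 1 from rfl, iteratedDeriv_succ, iteratedDeriv_one]
    rw [show deriv (fun z => 1 + (1/2) * C₁ * exp (-2*z) + C₂ * exp (-z) + C₃ * exp z
        + (1/2) * C₄ * exp (2*z))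
      = fun w => (1/2) * C₁ * (-2 * exp (-2*w)) + C₂ * -exp (-w) + C₃ * exp w
        + (1/2) * C₄ * (2 * exp (2*w)) from funext fun w => (hFder w).deriv]
    exact (hF'der z).deriv
  -- second-level derivative data
  have hg'd : HasDerivAt g' _ z :=
    ((((hexp' (-(1:ℝ)/2) z).const_mul (-(1:ℝ)/2)).mul (hDen z)).sub
      ((hexp' (-(1:ℝ)/2) z).mul
        ((((hexp_neg' z).neg).const_mul C₆).const_mul s))).div
      ((hDen z).pow 2) (pow_ne_zero 2 hsz.ne')
  have hs0 : s ≠ 0 := by rcases hsor with rfl | rfl <;> norm_num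
  have hg'c : HasDerivAt g'
      (exp (-(1:ℝ)/2 * z) * (C₅^2 - 6*C₅*C₆*exp (-z) + C₆^2*exp (-z)^2)
        / (4 * s * (C₅ + C₆ * exp (-z))^3)) z := by
    convert hg'd using 1
    rw [show ((2:ℕ):ℝ) = 2 by norm_num]
    simp only [Pi.mul_apply, Pi.sub_apply, Pi.neg_apply]
    field_simp [hs0, hDz]
    ring
  have hg'z : g' z = exp (-(1:ℝ)/2 * z) * (C₆ * exp (-z) - C₅)
      / (2 * s * (C₅ + C₆ * exp (-z))^2) := by
    rw [hg'_def]
    field_simp [hs0, hDz]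
    ring
  have hH : HasDerivAt
      (fun w => (1 + (1/2) * C₁ * exp (-2*w) + C₂ * exp (-w) + C₃ * exp w
        + (1/2) * C₄ * exp (2*w)) * g' w) _ z := (hFder z).mul hg'c
  have hev2 : (fun w => (1 + (1/2) * C₁ * exp (-2*w) + C₂ * exp (-w) + C₃ * exp w
        + (1/2) * C₄ * exp (2*w)) *
        deriv (fun u => Real.sqrt (exp (-u) / (C₅ + C₆ * exp (-u))^2)) w)
      =ᶠ[nhds z] (fun w => (1 + (1/2) * C₁ * exp (-2*w) + C₂ * exp (-w) + C₃ * exp w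
        + (1/2) * C₄ * exp (2*w)) * g' w) := by
    filter_upwards [hUopen.mem_nhds hzU] with x hx
    rw [hderiv_sqrt x hx]
  -- rpow
  have hq : 0 < exp (-(1:ℝ)/2 * z) / (s * (C₅ + C₆ * exp (-z))) :=
    div_pos (exp_pos _) hsz
  have hrpow : (exp (-z) / (C₅ + C₆ * exp (-z))^2) ^ (-(3/2):ℝ)
      = ((exp (-(1:ℝ)/2 * z) / (s * (C₅ + C₆ * exp (-z))))^3)⁻¹ := by
    rw [hsqform z hsz,
      ← Real.rpow_natCast (exp (-(1:ℝ)/2 * z) / (s * (C₅ + C₆ * exp (-z)))) 2,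
      ← Real.rpow_mul hq.le,
      show ((2:ℕ):ℝ) * (-(3/2)) = -((3:ℕ):ℝ) by push_cast; ring,
      Real.rpow_neg hq.le, Real.rpow_natCast]
  rw [hit, hev2.deriv_eq, hH.deriv, hrpow, hg'z]
  -- rewrite all exponentials in terms of E := exp (-(1/2)z)
  have hEm : exp (-z) = exp (-(1:ℝ)/2 * z)^2 := by
    rw [sq, ← Real.exp_add]; congr 1; ring
  have hEm2 : exp (-2*z) = exp (-(1:ℝ)/2 * z)^4 := by
    rw [← Real.exp_nat_mul]; congr 1; push_cast; ring
  have hEz : exp z = (exp (-(1:ℝ)/2 * z)^2)⁻¹ := by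
    rw [← hEm, Real.exp_neg, inv_inv]
  have hE2z : exp (2*z) = (exp (-(1:ℝ)/2 * z)^4)⁻¹ := by
    rw [← hEm2, show (-2:ℝ)*z = -(2*z) by ring, Real.exp_neg, inv_inv]
  rw [hEz, hE2z, hEm2, hEm]
  rw [hEm] at hDz
  rw [show -24 * (C₂ * C₅^2 - 2 * C₅ * C₆ + C₃ * C₆^2)
      = -24 * (C₂ * C₅^2 - 2 * C₅ * C₆ + C₃ * C₆^2)
        + 24 * (exp (-(1:ℝ)/2 * z)^2)⁻¹ * C₆ * (C₃*C₅ - C₄*C₆)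
        - 24 * exp (-(1:ℝ)/2 * z)^2 * C₅ * (C₁*C₅ - C₂*C₆) from by
    rw [h1, h2]; ring]
  have hE : exp (-(1:ℝ)/2 * z) ≠ 0 := exp_ne_zero _
  obtain ⟨E, hEgen⟩ : ∃ E, exp (-(1:ℝ)/2 * z) = E := ⟨_, rfl⟩
  rw [hEgen] at hDz hE ⊢
  rcases hsor with rfl | rfl <;> field_simp [hE, hDz, show C₅ + E^2*C₆ ≠ 0 by rwa [mul_comm] at hDz] <;> ring
end

section
/- Let k₁, k₂ ∈ ℝ, not both zero, let I ⊆ ℝ be an open interval on which k₂e^{3z} ≠ k₁, and let F : ℝ → ℝ be twice continuously differentiable on I. Then k₂e^{(3/2)z}·((1/2)F''(z) − (3/2)F'(z) + F(z) − 1) = k₁e^{−(3/2)z}·((1/2)F''(z) + (3/2)F'(z) + F(z) − 1) holds for all z ∈ I if and only if there exist constants C₁, C₂ ∈ ℝ such that F(z) = 1 + k₁((1/2)C₁e^{−2z} + C₂e^{−z}) + k₂(C₁e^{z} + (1/2)C₂e^{2z}) for all z ∈ I. -/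
open Real

private lemma hasDerivAt_exp_mul (c z : ℝ) :
    HasDerivAt (fun w : ℝ => Real.exp (c * w)) (c * Real.exp (c * z)) z := by
  exact (((hasDerivAt_id' z).const_mul c).exp).congr_deriv (by ring)

/-- the harmonic-Weyl ODE
`k₂e^{(3/2)z}(ℒ⁺F − 1) = k₁e^{−(3/2)z}(ℒ⁻F − 1)` on an open interval where
`k₂e^{3z} ≠ k₁` (with `k₁, k₂` not both zero) holds iff
`F(z) = 1 + k₁((1/2)C₁e^{−2z} + C₂e^{−z}) + k₂(C₁eᶻ + (1/2)C₂e^{2z})` for constants. -/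
theorem harmonicWeyl_ode_iff (k₁ k₂ : ℝ) (hk : ¬(k₁ = 0 ∧ k₂ = 0))
    (I : Set ℝ) (hIopen : IsOpen I) (hIconn : IsPreconnected I)
    (hI : ∀ z ∈ I, k₂ * exp (3*z) ≠ k₁)
    (F : ℝ → ℝ) (hF : ContDiffOn ℝ 2 F I) :
    (∀ z ∈ I,
      k₂ * exp ((3/2)*z) * ((1/2) * deriv (deriv F) z - (3/2) * deriv F z + F z - 1)
        = k₁ * exp (-(3/2)*z) * ((1/2) * deriv (deriv F) z + (3/2) * deriv F z + F z - 1)) ↔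
    (∃ C₁ C₂ : ℝ, ∀ z ∈ I,
      F z = 1 + k₁ * ((1/2) * C₁ * exp (-2*z) + C₂ * exp (-z))
        + k₂ * (C₁ * exp z + (1/2) * C₂ * exp (2*z))) := by
  have hderiv1 : ∀ z ∈ I, HasDerivAt F (deriv F z) z := by
    intro z hz
    exact (((hF.differentiableOn (by norm_num)).differentiableAt
      (hIopen.mem_nhds hz))).hasDerivAt
  have hFd : ContDiffOn ℝ 1 (deriv F) I := hF.deriv_of_isOpen hIopen (by norm_num)
  have hderiv2 : ∀ z ∈ I, HasDerivAt (deriv F) (deriv (deriv F) z) z := by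
    intro z hz
    exact ((hFd.differentiableOn one_ne_zero).differentiableAt (hIopen.mem_nhds hz)).hasDerivAt
  constructor
  · intro h
    rcases Set.eq_empty_or_nonempty I with hIe | ⟨z₀, hz₀⟩
    · exact ⟨0, 0, fun z hz => absurd hz (by simp [hIe])⟩
    -- derived polynomial form of the ODE
    have hODE : ∀ z ∈ I, (k₂ * exp z ^ 3 - k₁) * deriv (deriv F) z
        = 3 * (k₂ * exp z ^ 3 + k₁) * deriv F z
          - 2 * (k₂ * exp z ^ 3 - k₁) * (F z - 1) := by
      intro z hz
      have h0 := h z hz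
      set t := exp ((1/2) * z) with ht_def
      have ht : t ≠ 0 := exp_ne_zero _
      have hp : exp ((3/2) * z) = t ^ 3 := by
        rw [show (3/2) * z = (1/2)*z + ((1/2)*z + (1/2)*z) by ring, exp_add, exp_add]; ring
      have hm : exp (-(3/2) * z) = (t ^ 3)⁻¹ := by
        rw [show -(3/2) * z = -((3/2) * z) by ring, exp_neg, hp]
      have hA : exp z = t ^ 2 := by
        rw [show z = (1/2)*z + (1/2)*z by ring, exp_add]; ring
      rw [hp, hm] at h0
      rw [hA]
      have hinv : t ^ 3 * (t ^ 3)⁻¹ = 1 := mul_inv_cancel₀ (pow_ne_zero 3 ht)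
      linear_combination (2 * t ^ 3) * h0
        + (k₁ * (deriv (deriv F) z + 3 * deriv F z + 2 * (F z - 1))) * hinv
    have hDne : ∀ z ∈ I, k₂ * exp z ^ 3 - k₁ ≠ 0 := by
      intro z hz
      have h3 : exp (3 * z) = exp z ^ 3 := by
        rw [show (3:ℝ) * z = z + z + z by ring, exp_add, exp_add]; ring
      have := hI z hz
      rw [h3] at this
      exact sub_ne_zero.2 this
    set c₁ : ℝ → ℝ := fun w =>
      ((F w - 1) * (2*k₂*exp w^5 - 2*k₁*exp w^2) - deriv F w * (2*k₁*exp w^2 + k₂*exp w^5))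
        / (k₂ * exp w ^ 3 - k₁) ^ 2 with hc1def
    set c₂ : ℝ → ℝ := fun w =>
      (deriv F w * (k₁*exp w + 2*k₂*exp w^4) - (F w - 1) * (2*k₂*exp w^4 - 2*k₁*exp w))
        / (k₂ * exp w ^ 3 - k₁) ^ 2 with hc2def
    have hc1deriv : ∀ z ∈ I, HasDerivAt c₁ 0 z := by
      intro z hz
      have hE := Real.hasDerivAt_exp z
      have hn : HasDerivAt (fun w =>
          (F w - 1) * (2*k₂*exp w^5 - 2*k₁*exp w^2) - deriv F w * (2*k₁*exp w^2 + k₂*exp w^5))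
          ((deriv F z) * (2*k₂*exp z^5 - 2*k₁*exp z^2)
            + (F z - 1) * (2*k₂*(5*exp z^4*exp z) - 2*k₁*(2*exp z^1*exp z))
            - (deriv (deriv F) z * (2*k₁*exp z^2 + k₂*exp z^5)
              + deriv F z * (2*k₁*(2*exp z^1*exp z) + k₂*(5*exp z^4*exp z)))) z := by
        exact (((hderiv1 z hz).sub_const 1).mul
            (((hE.pow 5).const_mul (2*k₂)).sub ((hE.pow 2).const_mul (2*k₁)))).sub
          ((hderiv2 z hz).mul
            (((hE.pow 2).const_mul (2*k₁)).add ((hE.pow 5).const_mul k₂)))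
      have hd : HasDerivAt (fun w => (k₂ * exp w ^ 3 - k₁) ^ 2)
          (2 * (k₂ * exp z ^ 3 - k₁) ^ 1 * (k₂ * (3 * exp z ^ 2 * exp z))) z :=
        (((hE.pow 3).const_mul k₂).sub_const k₁).pow 2
      have hq := hn.div hd (pow_ne_zero 2 (hDne z hz))
      have h0 : HasDerivAt c₁ 0 z := by
        refine hq.congr_deriv (Eq.symm ?_)
        rw [eq_comm, div_eq_zero_iff]
        left
        linear_combination (-(2*k₁*exp z^2 + k₂*exp z^5) * (k₂*exp z^3 - k₁)) * hODE z hz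
      exact h0
    have hc2deriv : ∀ z ∈ I, HasDerivAt c₂ 0 z := by
      intro z hz
      have hE := Real.hasDerivAt_exp z
      have hn : HasDerivAt (fun w =>
          deriv F w * (k₁*exp w + 2*k₂*exp w^4) - (F w - 1) * (2*k₂*exp w^4 - 2*k₁*exp w))
          ((deriv (deriv F) z * (k₁*exp z + 2*k₂*exp z^4)
            + deriv F z * (k₁*exp z + 2*k₂*(4*exp z^3*exp z)))
            - ((deriv F z) * (2*k₂*exp z^4 - 2*k₁*exp z)
              + (F z - 1) * (2*k₂*(4*exp z^3*exp z) - 2*k₁*exp z))) z := by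
        exact ((hderiv2 z hz).mul
            ((hE.const_mul k₁).add ((hE.pow 4).const_mul (2*k₂)))).sub
          (((hderiv1 z hz).sub_const 1).mul
            (((hE.pow 4).const_mul (2*k₂)).sub (hE.const_mul (2*k₁))))
      have hd : HasDerivAt (fun w => (k₂ * exp w ^ 3 - k₁) ^ 2)
          (2 * (k₂ * exp z ^ 3 - k₁) ^ 1 * (k₂ * (3 * exp z ^ 2 * exp z))) z :=
        (((hE.pow 3).const_mul k₂).sub_const k₁).pow 2
      have hq := hn.div hd (pow_ne_zero 2 (hDne z hz))
      have h0 : HasDerivAt c₂ 0 z := by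
        refine hq.congr_deriv (Eq.symm ?_)
        rw [eq_comm, div_eq_zero_iff]
        left
        linear_combination ((k₁*exp z + 2*k₂*exp z^4) * (k₂*exp z^3 - k₁)) * hODE z hz
      exact h0
    have hconv : Convex ℝ I := hIconn.convex
    have hconst : ∀ (c : ℝ → ℝ), (∀ z ∈ I, HasDerivAt c 0 z) → ∀ z ∈ I, c z = c z₀ := by
      intro c hc z hz
      apply hconv.is_const_of_fderivWithin_eq_zero
        (fun x hx => ((hc x hx).differentiableAt).differentiableWithinAt) ?_ hz hz₀
      intro x hx
      rw [fderivWithin_of_isOpen hIopen hx]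
      have hfd : HasFDerivAt c (0 : ℝ →L[ℝ] ℝ) x := by
        have := (hc x hx).hasFDerivAt
        refine this.congr_fderiv ?_
        ext y
        simp
      exact hfd.fderiv
    refine ⟨c₁ z₀, c₂ z₀, fun z hz => ?_⟩
    rw [← hconst c₁ hc1deriv z hz, ← hconst c₂ hc2deriv z hz]
    rw [hc1def, hc2def]
    have hA : exp z ≠ 0 := exp_ne_zero z
    have hm1 : exp (-z) = (exp z)⁻¹ := exp_neg z
    have hm2 : exp (-2*z) = (exp z ^ 2)⁻¹ := by
      rw [show -2*z = -(z+z) by ring, exp_neg, exp_add, sq]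
    have h2 : exp (2*z) = exp z ^ 2 := by
      rw [show (2:ℝ)*z = z + z by ring, exp_add, sq]
    rw [hm1, hm2, h2]
    have hD := hDne z hz
    field_simp
    ring
  · rintro ⟨C₁, C₂, hFeq⟩ z hz
    set g : ℝ → ℝ := fun w =>
      1 + k₁ * ((1/2) * C₁ * exp (-2*w) + C₂ * exp (-w))
        + k₂ * (C₁ * exp w + (1/2) * C₂ * exp (2*w)) with hgdef
    set g1 : ℝ → ℝ := fun w =>
      k₁ * (-C₁ * exp (-2*w) - C₂ * exp (-w)) + k₂ * (C₁ * exp w + C₂ * exp (2*w)) with hg1def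
    set g2 : ℝ → ℝ := fun w =>
      k₁ * (2 * C₁ * exp (-2*w) + C₂ * exp (-w)) + k₂ * (C₁ * exp w + 2 * C₂ * exp (2*w))
      with hg2def
    have he2 : ∀ w : ℝ, HasDerivAt (fun u : ℝ => exp (2*u)) (2 * exp (2*w)) w := fun w =>
      hasDerivAt_exp_mul 2 w
    have hem1 : ∀ w : ℝ, HasDerivAt (fun u : ℝ => exp (-u)) (-exp (-w)) w := by
      intro w
      have := hasDerivAt_exp_mul (-1) w
      simp only [neg_one_mul, neg_mul] at this ⊢
      simpa using this
    have hem2 : ∀ w : ℝ, HasDerivAt (fun u : ℝ => exp (-2*u)) (-2 * exp (-2*w)) w := fun w =>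
      hasDerivAt_exp_mul (-2) w
    have hgd : ∀ w : ℝ, HasDerivAt g (g1 w) w := by
      intro w
      have : HasDerivAt g
          (k₁ * ((1/2) * C₁ * (-2 * exp (-2*w)) + C₂ * (-exp (-w)))
            + k₂ * (C₁ * exp w + (1/2) * C₂ * (2 * exp (2*w)))) w := by
        rw [hgdef]
        exact ((((((hem2 w).const_mul ((1/2) * C₁)).add
          ((hem1 w).const_mul C₂)).const_mul k₁).const_add 1).add
          ((((Real.hasDerivAt_exp w).const_mul C₁).add
            ((he2 w).const_mul ((1/2) * C₂))).const_mul k₂))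
      convert this using 1
      rw [hg1def]; ring
    have hg1d : ∀ w : ℝ, HasDerivAt g1 (g2 w) w := by
      intro w
      have : HasDerivAt g1
          (k₁ * (-C₁ * (-2 * exp (-2*w)) - C₂ * (-exp (-w)))
            + k₂ * (C₁ * exp w + C₂ * (2 * exp (2*w)))) w := by
        rw [hg1def]
        exact (((((hem2 w).const_mul (-C₁)).sub
          ((hem1 w).const_mul C₂)).const_mul k₁)).add
          ((((Real.hasDerivAt_exp w).const_mul C₁).add
            ((he2 w).const_mul C₂)).const_mul k₂)
      convert this using 1
      rw [hg2def]; ring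
    have hFg : Set.EqOn F g I := fun w hw => by rw [hgdef]; exact hFeq w hw
    have hnhds : I ∈ nhds z := hIopen.mem_nhds hz
    have hFg_ev : F =ᶠ[nhds z] g := Filter.eventuallyEq_of_mem hnhds hFg
    have hd1 : deriv F z = g1 z := by
      rw [hFg_ev.deriv_eq, (hgd z).deriv]
    have hd1on : Set.EqOn (deriv F) g1 I := by
      intro w hw
      have : F =ᶠ[nhds w] g := Filter.eventuallyEq_of_mem (hIopen.mem_nhds hw) hFg
      rw [this.deriv_eq, (hgd w).deriv]
    have hd2 : deriv (deriv F) z = g2 z := by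
      have : deriv F =ᶠ[nhds z] g1 := Filter.eventuallyEq_of_mem hnhds hd1on
      rw [this.deriv_eq, (hg1d z).deriv]
    rw [hd1, hd2, hFg hz, hgdef, hg1def, hg2def]
    simp only
    set t := exp ((1/2) * z) with ht_def
    have ht : t ≠ 0 := exp_ne_zero _
    have hp : exp ((3/2) * z) = t ^ 3 := by
      rw [show (3/2) * z = (1/2)*z + ((1/2)*z + (1/2)*z) by ring, exp_add, exp_add]; ring
    have hm : exp (-(3/2) * z) = (t ^ 3)⁻¹ := by
      rw [show -(3/2) * z = -((3/2) * z) by ring, exp_neg, hp]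
    have hA : exp z = t ^ 2 := by
      rw [show z = (1/2)*z + (1/2)*z by ring, exp_add]; ring
    have h2 : exp (2*z) = t ^ 4 := by
      rw [show (2:ℝ)*z = (1/2)*z + ((1/2)*z + ((1/2)*z + (1/2)*z)) by ring,
        exp_add, exp_add, exp_add]; ring
    have hm1 : exp (-z) = (t ^ 2)⁻¹ := by rw [exp_neg, hA]
    have hm2 : exp (-2*z) = (t ^ 4)⁻¹ := by
      rw [show -2*z = -(2*z) by ring, exp_neg, h2]
    rw [hp, hm, hA, h2, hm1, hm2]
    field_simp
    ring
end

section
/- For every x ∈ ℝ, 2(1 + 2cosh x)·sinh x = 2cosh x + cosh 2x if and only if e^{4x} − 4e^{x} − 3 = 0. Moreover, there is exactly one real number x with e^{4x} − 4e^{x} − 3 = 0, and this x is positive. -/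
open Real

lemma page_key (x : ℝ) :
    2 * (1 + 2 * Real.cosh x) * Real.sinh x - (2 * Real.cosh x + Real.cosh (2*x))
      = (exp (4*x) - 4 * exp x - 3) / (2 * exp (2*x)) := by
  have h2 : exp (2*x) = exp x ^ 2 := by
    rw [show (2:ℝ)*x = ((2:ℕ):ℝ)*x by norm_num, Real.exp_nat_mul]
  have h4 : exp (4*x) = exp x ^ 4 := by
    rw [show (4:ℝ)*x = ((4:ℕ):ℝ)*x by norm_num, Real.exp_nat_mul]
  have hn2 : exp (-(2*x)) = (exp x ^ 2)⁻¹ := by rw [Real.exp_neg, h2]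
  have hu : (0:ℝ) < exp x := exp_pos x
  rw [Real.cosh_eq, Real.cosh_eq, Real.sinh_eq, h2, h4, hn2, Real.exp_neg]
  field_simp
  ring

lemma poly_root_gt_one {u : ℝ} (hu : 0 < u) (h : u^4 - 4*u - 3 = 0) : 1 < u := by
  by_contra hle
  push_neg at hle
  have h1 : u^4 ≤ 1 := pow_le_one₀ hu.le hle
  nlinarith

/-- `2(1 + 2cosh x)·sinh x = 2cosh x + cosh 2x` iff
`e^{4x} − 4eˣ − 3 = 0`; moreover there is exactly one real root of
`e^{4x} − 4eˣ − 3 = 0`, and it is positive. -/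
theorem page_parameter_equation :
    (∀ x : ℝ,
      2 * (1 + 2 * Real.cosh x) * Real.sinh x = 2 * Real.cosh x + Real.cosh (2*x) ↔
      exp (4*x) - 4 * exp x - 3 = 0) ∧
    (∃ x : ℝ, 0 < x ∧ exp (4*x) - 4 * exp x - 3 = 0 ∧
      ∀ y : ℝ, exp (4*y) - 4 * exp y - 3 = 0 → y = x) := by
  constructor
  · intro x
    have key := page_key x
    have hd : (2 * exp (2*x)) ≠ 0 := by positivity
    constructor
    · intro h
      have h0 : (exp (4*x) - 4 * exp x - 3) / (2 * exp (2*x)) = 0 := by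
        rw [← key]; linarith
      have := (div_eq_zero_iff.mp h0).resolve_right hd
      linarith
    · intro h
      have h0 : (exp (4*x) - 4 * exp x - 3) / (2 * exp (2*x)) = 0 := by
        rw [h]; simp
      rw [h0] at key
      linarith
  · -- existence of root of t^4 - 4t - 3 in (1,2]
    have hcont : ContinuousOn (fun t : ℝ => t^4 - 4*t - 3) (Set.Icc 1 2) := by
      fun_prop
    have hmem : (0:ℝ) ∈ Set.Icc ((fun t : ℝ => t^4 - 4*t - 3) 1)
        ((fun t : ℝ => t^4 - 4*t - 3) 2) := by norm_num
    obtain ⟨c, hcmem, hfc⟩ :=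
      intermediate_value_Icc (by norm_num : (1:ℝ) ≤ 2) hcont hmem
    simp only at hfc
    have hc0 : (0:ℝ) < c := lt_of_lt_of_le one_pos hcmem.1
    refine ⟨Real.log c, ?_, ?_, ?_⟩
    · have hc1 : 1 < c := poly_root_gt_one hc0 hfc
      exact Real.log_pos hc1
    · have h4 : exp (4 * Real.log c) = c ^ 4 := by
        rw [show (4:ℝ)*Real.log c = ((4:ℕ):ℝ)*Real.log c by norm_num,
          Real.exp_nat_mul, Real.exp_log hc0]
      rw [h4, Real.exp_log hc0]; linarith
    · intro y hy
      set u := exp y with hu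
      have h4 : exp (4 * y) = u ^ 4 := by
        rw [show (4:ℝ)*y = ((4:ℕ):ℝ)*y by norm_num, Real.exp_nat_mul]
      rw [h4] at hy
      have hupos : 0 < u := exp_pos y
      have hroot : u^4 - 4*u - 3 = 0 := by linarith
      have hu1 : 1 < u := poly_root_gt_one hupos hroot
      have hc1 : 1 < c := poly_root_gt_one hc0 hfc
      have hfact : (c - u) * (c^3 + c^2*u + c*u^2 + u^3 - 4) = 0 := by
        linear_combination hfc - hroot
      have hA : 1 < c^3 := by nlinarith
      have hB : 1 < c^2*u := by nlinarith
      have hC : 1 < c*u^2 := by nlinarith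
      have hD : 1 < u^3 := by nlinarith
      have hpos : c^3 + c^2*u + c*u^2 + u^3 - 4 > 0 := by linarith
      have huc : u = c := by
        rcases mul_eq_zero.mp hfact with h | h
        · linarith
        · linarith
      have : exp y = exp (Real.log c) := by rw [Real.exp_log hc0, ← huc]
      exact Real.exp_injective this
end

section
/- Let F(z) = 1 − (1/8)e^{−2z} + (1/4)e^{−z} − (9/4)e^{z} + (9/8)e^{2z}. Then: (i) F(−log 3) = 0 and F'(−log 3) = 1; (ii) F(0) = 0, F'(0) = 0, and F''(0) = 2; (iii) F(z) > 0 for every z with −log 3 < z < 0; and (iv) F satisfies (1/4)F''''(z) − (5/4)F''(z) + F(z) = 1 and 𝓑(F)(z) = 0 for all z ∈ ℝ. -/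
open Real

/-- The profile function of the Taub-bolt metric. -/
noncomputable def Ftaubbolt (z : ℝ) : ℝ :=
  1 - (1/8) * exp (-2*z) + (1/4) * exp (-z) - (9/4) * exp z + (9/8) * exp (2*z)

/-- auxiliary family of functions -/
noncomputable def Gaux (c₀ c₁ c₂ c₃ c₄ : ℝ) (z : ℝ) : ℝ :=
  c₀ + c₁ * exp (-2*z) + c₂ * exp (-z) + c₃ * exp z + c₄ * exp (2*z)

lemma Gaux_hasDerivAt (c₀ c₁ c₂ c₃ c₄ z : ℝ) :
    HasDerivAt (Gaux c₀ c₁ c₂ c₃ c₄) (Gaux 0 (-2*c₁) (-c₂) c₃ (2*c₄) z) z := by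
  have h1 : HasDerivAt (fun x : ℝ => exp (-2*x)) (exp (-2*z) * (-2*1)) z :=
    ((hasDerivAt_id z).const_mul (-2)).exp
  have h2 : HasDerivAt (fun x : ℝ => exp (-x)) (exp (-z) * (-1)) z := by
    simpa using ((hasDerivAt_id z).const_mul (-1)).exp
  have h3 : HasDerivAt (fun x : ℝ => exp x) (exp z) z := Real.hasDerivAt_exp z
  have h4 : HasDerivAt (fun x : ℝ => exp (2*x)) (exp (2*z) * (2*1)) z :=
    ((hasDerivAt_id z).const_mul 2).exp
  have H := ((((hasDerivAt_const z c₀).add (h1.const_mul c₁)).add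
    (h2.const_mul c₂)).add (h3.const_mul c₃)).add (h4.const_mul c₄)
  have hv : Gaux 0 (-2*c₁) (-c₂) c₃ (2*c₄) z
      = c₀ + (0 + (0 + (0 + c₁ * (exp (-2*z) * (-2*1)) + c₂ * (exp (-z) * (-1)) +
        c₃ * exp z) + c₄ * (exp (2*z) * (2*1)))) - c₀ := by
    simp [Gaux]; ring
  rw [hv]
  refine (H.congr_deriv (by ring)).congr_of_eventuallyEq (Filter.Eventually.of_forall fun x => ?_)
  simp only [Gaux, Pi.add_apply]

lemma deriv_Gaux (c₀ c₁ c₂ c₃ c₄ : ℝ) :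
    deriv (Gaux c₀ c₁ c₂ c₃ c₄) = Gaux 0 (-2*c₁) (-c₂) c₃ (2*c₄) :=
  funext fun z => (Gaux_hasDerivAt c₀ c₁ c₂ c₃ c₄ z).deriv

lemma F_eq_Gaux : Ftaubbolt = Gaux 1 (-(1/8)) (1/4) (-(9/4)) (9/8) := by
  funext z; simp [Ftaubbolt, Gaux]; ring

lemma d1 : deriv Ftaubbolt = Gaux 0 (1/4) (-(1/4)) (-(9/4)) (9/4) := by
  rw [F_eq_Gaux, deriv_Gaux]; norm_num

lemma d2 : iteratedDeriv 2 Ftaubbolt = Gaux 0 (-(1/2)) (1/4) (-(9/4)) (9/2) := by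
  show iteratedDeriv (1+1) Ftaubbolt = _
  rw [iteratedDeriv_succ, iteratedDeriv_one, d1, deriv_Gaux]
  norm_num

lemma d3 : iteratedDeriv 3 Ftaubbolt = Gaux 0 1 (-(1/4)) (-(9/4)) 9 := by
  show iteratedDeriv (2+1) Ftaubbolt = _
  rw [iteratedDeriv_succ, d2, deriv_Gaux]
  norm_num

lemma d4 : iteratedDeriv 4 Ftaubbolt = Gaux 0 (-2) (1/4) (-(9/4)) 18 := by
  show iteratedDeriv (3+1) Ftaubbolt = _
  rw [iteratedDeriv_succ, d3, deriv_Gaux]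
  norm_num

/-- properties of the Taub-bolt profile function: the bolting condition
at `z = −log 3`, the ALF condition at `z = 0`, positivity on `(−log 3, 0)`, and
Bach-flatness. -/
theorem taubbolt_profile_properties :
    (Ftaubbolt (-Real.log 3) = 0 ∧ deriv Ftaubbolt (-Real.log 3) = 1) ∧
    (Ftaubbolt 0 = 0 ∧ deriv Ftaubbolt 0 = 0 ∧ iteratedDeriv 2 Ftaubbolt 0 = 2) ∧
    (∀ z : ℝ, -Real.log 3 < z → z < 0 → 0 < Ftaubbolt z) ∧
    ((∀ z : ℝ, (1/4) * iteratedDeriv 4 Ftaubbolt z - (5/4) * iteratedDeriv 2 Ftaubbolt z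
        + Ftaubbolt z = 1) ∧
      (∀ z : ℝ, Bop Ftaubbolt z = 0)) := by
  have hl : Real.exp (Real.log 3) = 3 := Real.exp_log (by norm_num)
  have e1 : Real.exp (-(-Real.log 3)) = 3 := by rw [neg_neg, hl]
  have e2 : Real.exp (-Real.log 3) = 3⁻¹ := by rw [Real.exp_neg, hl]
  have e3 : Real.exp (-2 * -Real.log 3) = 9 := by
    rw [show (-2:ℝ) * -Real.log 3 = Real.log 3 + Real.log 3 by ring, Real.exp_add, hl]
    norm_num
  have e4 : Real.exp (2 * -Real.log 3) = 9⁻¹ := by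
    rw [show (2:ℝ) * -Real.log 3 = -(Real.log 3 + Real.log 3) by ring, Real.exp_neg,
      Real.exp_add, hl]
    norm_num
  refine ⟨⟨?_, ?_⟩, ⟨?_, ?_, ?_⟩, ?_, ?_, ?_⟩
  · rw [F_eq_Gaux]; simp only [Gaux, e1, e2, e3, e4]; norm_num
  · rw [d1]; simp only [Gaux, e1, e2, e3, e4]; norm_num
  · simp [Ftaubbolt]; norm_num
  · rw [d1]; simp [Gaux]
  · rw [d2]; simp [Gaux]; norm_num
  · -- positivity
    intro z h1 h2
    set u := Real.exp z with hu
    have hu0 : 0 < u := Real.exp_pos z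
    have hlo : (3:ℝ)⁻¹ < u := by
      rw [← e2]; exact Real.exp_lt_exp.mpr h1
    have hhi : u < 1 := by
      rw [← Real.exp_zero]; exact Real.exp_lt_exp.mpr h2
    have hm : Real.exp (-z) = u⁻¹ := Real.exp_neg z
    have h2z : Real.exp (2*z) = u^2 := by
      rw [two_mul, Real.exp_add]; ring
    have hm2 : Real.exp (-2*z) = (u^2)⁻¹ := by
      rw [show (-2:ℝ)*z = -(2*z) by ring, Real.exp_neg, h2z]
    rw [Ftaubbolt, hm, h2z, hm2]
    have key : 1 - 1/8 * (u^2)⁻¹ + 1/4 * u⁻¹ - 9/4 * u + 9/8 * u^2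
        = ((u-1)^2 * (3*u-1) * (3*u+1)) / (8 * u^2) := by
      field_simp
      ring
    rw [key]
    apply div_pos
    · have ha : 0 < (u-1)^2 := by
        have hne : u - 1 ≠ 0 := sub_ne_zero.mpr (ne_of_lt hhi)
        exact sq_pos_of_ne_zero hne
      have hb2 : 0 < 3*u - 1 := by nlinarith
      have hc : 0 < 3*u + 1 := by nlinarith
      exact mul_pos (mul_pos ha hb2) hc
    · positivity
  · -- ODE
    intro z
    rw [d2, d4, F_eq_Gaux]
    simp only [Gaux]
    ring
  · -- Bach-flatness
    intro z
    have hb : Real.exp z ≠ 0 := (Real.exp_pos z).ne'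
    have hm : Real.exp (-z) = (Real.exp z)⁻¹ := Real.exp_neg z
    have h2z : Real.exp (2*z) = (Real.exp z)^2 := by
      rw [two_mul, Real.exp_add]; ring
    have hm2 : Real.exp (-2*z) = ((Real.exp z)^2)⁻¹ := by
      rw [show (-2:ℝ)*z = -(2*z) by ring, Real.exp_neg, h2z]
    rw [Bop, d1, d2, d3, F_eq_Gaux]
    simp only [Gaux, hm, h2z, hm2]
    field_simp
    ring
end
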